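/- For any two elements x, y of an abelian group G, the symmetric reflection space generated by {x, y} equals ⟨x - y⟩ + ⟨x + y⟩ + x, i.e., {m(x - y) + n(x + y) + x : m, n ∈ ℤ}. -/

import Mathlib

/-- The symmetric reflection space generated by a subset `A`: the smallest subset of `G`
containing `A` closed under `(a, b) ↦ a - 2b`. -/
def symReflGen {G : Type*} [AddCommGroup G] (A : Set G) : Set G :=
  ⋂₀ {B : Set G | A ⊆ B ∧ ∀ a ∈ B, ∀ b ∈ B, a - 2 • b ∈ B}

theorem symReflGen_pair {G : Type*} [AddCommGroup G] (x y : G) :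
    symReflGen {x, y} = {g : G | ∃ m n : ℤ, g = m • (x - y) + n • (x + y) + x} := by
  set gen := symReflGen ({x, y} : Set G) with hgen
  have hx : x ∈ gen := by
    intro B hB; exact hB.1 (Or.inl rfl)
  have hy : y ∈ gen := by
    intro B hB; exact hB.1 (Or.inr rfl)
  have hcl : ∀ a ∈ gen, ∀ b ∈ gen, a - 2 • b ∈ gen := by
    intro a ha b hb B hB
    exact hB.2 a (ha B hB) b (hb B hB)
  have hneg : ∀ a ∈ gen, -a ∈ gen := by
    intro a ha
    have := hcl a ha a ha
    simpa [two_smul, sub_add_eq_sub_sub] using this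
  have hadd : ∀ a ∈ gen, ∀ b ∈ gen, a + (2 * 1 : ℤ) • b ∈ gen := by
    intro a ha b hb
    have := hcl a ha (-b) (hneg b hb)
    have h : a - 2 • (-b) = a + (2 * 1 : ℤ) • b := by
      simp [two_smul, two_zsmul, sub_neg_eq_add]
      abel
    rwa [h] at this
  have hsub : ∀ a ∈ gen, ∀ b ∈ gen, a - (2 * 1 : ℤ) • b ∈ gen := by
    intro a ha b hb
    have := hcl a ha b hb
    have h : a - 2 • b = a - (2 * 1 : ℤ) • b := by
      simp [two_smul, two_zsmul]
    rwa [h] at this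
  have htrans : ∀ c ∈ gen, ∀ k : ℤ, ∀ a ∈ gen, a + (2 * k) • c ∈ gen := by
    intro c hc k
    induction k using Int.induction_on with
    | zero => intro a ha; simpa using ha
    | succ n ih =>
      intro a ha
      have h2 := hadd a ha c hc
      have := ih _ h2
      have heq : a + (2 * 1 : ℤ) • c + (2 * (n : ℤ)) • c = a + (2 * ((n : ℤ) + 1)) • c := by
        rw [add_assoc, ← add_smul]; congr 1; ring_nf
      rwa [heq] at this
    | pred n ih =>
      intro a ha
      have h2 := hsub a ha c hc
      have := ih _ h2
      have heq : a - (2 * 1 : ℤ) • c + (2 * (-(n : ℤ))) • c = a + (2 * (-(n : ℤ) - 1)) • c := by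
        rw [sub_eq_add_neg, add_assoc, ← neg_one_smul ℤ ((2*1:ℤ) • c), smul_smul, ← add_smul]
        congr 1; ring_nf
      rwa [heq] at this
  ext g
  constructor
  · intro hg
    refine hg {g : G | ∃ m n : ℤ, g = m • (x - y) + n • (x + y) + x} ⟨?_, ?_⟩
    · rintro z (rfl | rfl)
      · exact ⟨0, 0, by simp⟩
      · exact ⟨-1, 0, by simp⟩
    · rintro a ⟨m, n, rfl⟩ b ⟨m', n', rfl⟩
      refine ⟨m - 2 * m' - 1, n - 2 * n' - 1, ?_⟩
      rw [two_smul]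
      module
  · rintro ⟨m, n, rfl⟩
    rcases Int.even_or_odd (m + n) with ⟨p, hp⟩ | ⟨p, hp⟩
    · have hn : n = 2 * p - m := by omega
      subst hn
      have h1 := htrans x hx p x hx
      have h2 := htrans y hy (p - m) _ h1
      have heq : x + (2 * p) • x + (2 * (p - m)) • y = m • (x - y) + (2 * p - m) • (x + y) + x := by
        module
      rwa [heq] at h2
    · have hn : n = 2 * p + 1 - m := by omega
      subst hn
      have h1 := htrans x hx (p + 1) y hy
      have h2 := htrans y hy (p - m) _ h1
      have heq : y + (2 * (p + 1)) • x + (2 * (p - m)) • y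
          = m • (x - y) + (2 * p + 1 - m) • (x + y) + x := by
        module
      rwa [heq] at h2
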